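/- A language L ⊆ A^I is irreducible if and only if every simplicial complex generating L is connected. Equivalently: there is a nontrivial partition I = I₀ ⊔ I₁ with L = π_{I₀}(L) × π_{I₁}(L) if and only if L is generated by some disconnected complex. -/

import Mathlib

/-- `W` determines output coordinate `i` of `f`: the value `f x i` only
depends on the restriction of `x` to `W`. -/
def Determines {B J A I : Type*} (f : (J → B) → (I → A)) (i : I) (W : Set J) : Prop :=
  ∀ x y : J → B, (∀ j ∈ W, x j = y j) → f x i = f y i

/-- The input window of output coordinate `i`: the intersection of all
determining sets (which, for finite data, is the smallest determining set). -/
def window {B J A I : Type*} (f : (J → B) → (I → A)) (i : I) : Set J :=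
  ⋂₀ {W : Set J | Determines f i W}

/-- The dual window of an input coordinate `j`. -/
def dualWindow {B J A I : Type*} (f : (J → B) → (I → A)) (j : J) : Set I :=
  {i : I | j ∈ window f i}

/-- The communication complex of `f`: `S ∈ K_f` iff `⋂_{i ∈ S} W_f(i) ≠ ∅`
(the empty intersection being all of `J`). -/
def commComplex {B J A I : Type*} (f : (J → B) → (I → A)) : Set (Set I) :=
  {S : Set I | (⋂ i ∈ S, window f i).Nonempty}

/-- A complex `K` over `I` generates the language `L ⊆ A^I` if some function
`f : B^J → A^I` (with `B, J` finite, `J` nonempty) has image `L` and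
communication complex contained in `K`. -/
def Generates {A I : Type*} (K : Set (Set I)) (L : Set (I → A)) : Prop :=
  ∃ (B J : Type) (_ : Finite B) (_ : Finite J) (_ : Nonempty J)
    (f : (J → B) → (I → A)), Set.range f = L ∧ commComplex f ⊆ K

/-- A complex is connected if no nontrivial partition of the vertex set splits
all of its simplices. -/
def ConnectedComplex {I : Type*} (K : Set (Set I)) : Prop :=
  ¬ ∃ I0 : Set I, I0 ≠ ∅ ∧ I0 ≠ Set.univ ∧ ∀ S ∈ K, S ⊆ I0 ∨ S ⊆ I0ᶜ

/-- A simplicial complex: a downward closed collection of subsets. -/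
def IsComplex {I : Type*} (K : Set (Set I)) : Prop :=
  ∀ S ∈ K, ∀ T ⊆ S, T ∈ K

/-- The 1-skeleton of a complex, as a simple graph. -/
def skeletonGraph {I : Type*} (K : Set (Set I)) : SimpleGraph I :=
  SimpleGraph.fromRel (fun i j => ({i, j} : Set I) ∈ K)

/-- The complex associated to a graph: the empty set, the singletons, and the
edges. -/
def treeComplex {I : Type*} (G : SimpleGraph I) : Set (Set I) :=
  {S | S = ∅ ∨ (∃ i, S = {i}) ∨ ∃ i j, G.Adj i j ∧ S = ({i, j} : Set I)}

/-- The maximal simplices of a complex. -/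
def maxSimplices {I : Type*} (K : Set (Set I)) : Set (Set I) :=
  {S | S ∈ K ∧ ∀ T ∈ K, S ⊆ T → S = T}

/-- The image `f_*(K)` of a complex `K` on the input coordinates of `f`:
generated by the unions of dual windows over simplices of `K`. -/
def pushComplex {B J A I : Type*} (f : (J → B) → (I → A)) (K : Set (Set J)) : Set (Set I) :=
  {T : Set I | ∃ S ∈ K, T ⊆ ⋃ j ∈ S, dualWindow f j}


/-- `L` splits as a product along the partition `I = I0 ⊔ I0ᶜ`:
`L = π_{I0}(L) × π_{I0ᶜ}(L)`. -/
def SplitBy {A I : Type*} (L : Set (I → A)) (I0 : Set I) : Prop :=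
  L = {x | (∃ y ∈ L, ∀ i ∈ I0, x i = y i) ∧ (∃ y ∈ L, ∀ i ∉ I0, x i = y i)}

lemma det_inter {B J A I : Type*} (f : (J → B) → (I → A)) (i : I) {W1 W2 : Set J}
    (h1 : Determines f i W1) (h2 : Determines f i W2) : Determines f i (W1 ∩ W2) := by
  classical
  intro x y hxy
  set z : J → B := fun j => if j ∈ W1 then x j else y j with hz
  have e1 : f x i = f z i := h1 x z (fun j hj => by simp [hz, hj])
  have e2 : f z i = f y i := by
    refine h2 z y (fun j hj => ?_)
    by_cases hj1 : j ∈ W1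
    · simpa [hz, hj1] using hxy j ⟨hj1, hj⟩
    · simp [hz, hj1]
  exact e1.trans e2

lemma det_window {B J A I : Type*} [Finite J] (f : (J → B) → (I → A)) (i : I) :
    Determines f i (window f i) := by
  classical
  have key : ∀ F : Set (Set J), F.Finite →
      (∀ W ∈ F, Determines f i W) → Determines f i (⋂₀ F) := by
    intro F hF
    refine @Set.Finite.induction_on (Set J)
      (fun F _ => (∀ W ∈ F, Determines f i W) → Determines f i (⋂₀ F)) F hF ?_ ?_
    · intro _
      rw [Set.sInter_empty]
      intro x y h
      exact congrFun (congrArg f (funext fun j => h j (Set.mem_univ j))) i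
    · intro W F _ _ ih hall
      rw [Set.sInter_insert]
      exact det_inter f i (hall _ (Set.mem_insert _ _))
        (ih fun W hW => hall W (Set.mem_insert_of_mem _ hW))
  exact key _ (Set.toFinite _) (fun W hW => hW)

lemma mem_window_dual {B J A I : Type*} (f : (J → B) → (I → A)) {j : J} {i : I}
    (h : j ∈ window f i) : i ∈ dualWindow f j := h

lemma dualWindow_mem_comm {B J A I : Type*} (f : (J → B) → (I → A)) (j : J) :
    dualWindow f j ∈ commComplex f := by
  refine ⟨j, ?_⟩
  simp only [Set.mem_iInter]
  intro i hi
  exact hi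

/-- Key lemma, forward direction: a disconnected generating complex yields a split. -/
lemma split_of_disconnected {A I B J : Type*} [Finite J]
    {f : (J → B) → (I → A)} {L : Set (I → A)} {K : Set (Set I)} {I0 : Set I}
    (hrange : Set.range f = L) (hsub : commComplex f ⊆ K)
    (hdisc : ∀ S ∈ K, S ⊆ I0 ∨ S ⊆ I0ᶜ) : SplitBy L I0 := by
  classical
  ext x
  constructor
  · intro hx
    exact ⟨⟨x, hx, fun _ _ => rfl⟩, ⟨x, hx, fun _ _ => rfl⟩⟩
  · rintro ⟨⟨y0, hy0, h0⟩, ⟨y1, hy1, h1⟩⟩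
    rw [← hrange] at hy0 hy1 ⊢
    obtain ⟨u, rfl⟩ := hy0
    obtain ⟨v, rfl⟩ := hy1
    refine ⟨fun j => if dualWindow f j ⊆ I0 then u j else v j, ?_⟩
    funext i
    by_cases hi : i ∈ I0
    · have : f (fun j => if dualWindow f j ⊆ I0 then u j else v j) i = f u i := by
        refine det_window f i _ u (fun j hj => ?_)
        have hmem : dualWindow f j ⊆ I0 := by
          rcases hdisc _ (hsub (dualWindow_mem_comm f j)) with h | h
          · exact h
          · exact absurd (h (mem_window_dual f hj)) (by simpa using hi)
        simp [hmem]
      rw [this, ← h0 i hi]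
    · have : f (fun j => if dualWindow f j ⊆ I0 then u j else v j) i = f v i := by
        refine det_window f i _ v (fun j hj => ?_)
        have hmem : ¬ dualWindow f j ⊆ I0 := fun h => hi (h (mem_window_dual f hj))
        simp [hmem]
      rw [this, ← h1 i hi]

/-- Key lemma, backward direction: a split yields a disconnected generating complex. -/
lemma disconnected_of_split {A I : Type} [Finite A] [Finite I] (hne : Nonempty I)
    {L : Set (I → A)} {I0 : Set I} (hsplit : SplitBy L I0) :
    ∃ (B J : Type) (_ : Finite B) (_ : Finite J) (_ : Nonempty J)
      (f : (J → B) → (I → A)), Set.range f = L ∧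
        ∀ S ∈ commComplex f, S ⊆ I0 ∨ S ⊆ I0ᶜ := by
  classical
  rcases Set.eq_empty_or_nonempty L with hL | ⟨y0, hy0⟩
  · -- empty language: use an empty input alphabet
    set f0 : (I → Empty) → (I → A) := fun x _ => (x (Classical.choice hne)).elim with hf0
    refine ⟨Empty, I, inferInstance, inferInstance, hne, f0, ?_, ?_⟩
    · have : IsEmpty (I → Empty) := ⟨fun g => (g (Classical.choice hne)).elim⟩
      rw [Set.range_eq_empty, hL]
    · intro S hS
      rcases Set.eq_empty_or_nonempty S with rfl | ⟨i, hi⟩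
      · exact Or.inl (Set.empty_subset _)
      · exfalso
        obtain ⟨j, hj⟩ := hS
        have hjw : j ∈ window f0 i := by
          simp only [Set.mem_iInter] at hj
          exact hj i hi
        have : Determines f0 i ∅ := fun x y _ => (x (Classical.choice hne)).elim
        exact (hjw _ this)
  · -- nonempty language: relabel inputs according to the split
    set g : (I → A) → (I → A) := fun x i =>
      if i ∈ I0 then (if ∃ y ∈ L, ∀ k ∈ I0, x k = y k then x i else y0 i)
      else (if ∃ y ∈ L, ∀ k ∉ I0, x k = y k then x i else y0 i) with hg
    have hwin0 : ∀ i ∈ I0, window g i ⊆ I0 := by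
      intro i hi
      refine Set.sInter_subset_of_mem ?_
      intro x y hxy
      have hcond : (∃ y' ∈ L, ∀ k ∈ I0, x k = y' k) ↔ (∃ y' ∈ L, ∀ k ∈ I0, y k = y' k) := by
        constructor
        · rintro ⟨y', hy', h⟩; exact ⟨y', hy', fun k hk => (hxy k hk) ▸ h k hk⟩
        · rintro ⟨y', hy', h⟩; exact ⟨y', hy', fun k hk => (hxy k hk) ▸ h k hk⟩
      have hx : x i = y i := hxy i hi
      by_cases hc : ∃ y' ∈ L, ∀ k ∈ I0, x k = y' k
      · have hc' := hcond.mp hc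
        simp [hg, hi, hc, hc', hx]
      · have hc' : ¬ ∃ y' ∈ L, ∀ k ∈ I0, y k = y' k := fun h => hc (hcond.mpr h)
        simp [hg, hi, hc, hc']
    have hwin1 : ∀ i ∉ I0, window g i ⊆ I0ᶜ := by
      intro i hi
      refine Set.sInter_subset_of_mem ?_
      intro x y hxy
      have hcond : (∃ y' ∈ L, ∀ k ∉ I0, x k = y' k) ↔ (∃ y' ∈ L, ∀ k ∉ I0, y k = y' k) := by
        constructor
        · rintro ⟨y', hy', h⟩; exact ⟨y', hy', fun k hk => (hxy k hk) ▸ h k hk⟩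
        · rintro ⟨y', hy', h⟩; exact ⟨y', hy', fun k hk => (hxy k hk) ▸ h k hk⟩
      have hx : x i = y i := hxy i hi
      by_cases hc : ∃ y' ∈ L, ∀ k ∉ I0, x k = y' k
      · have hc' := hcond.mp hc
        simp [hg, hi, hc, hc', hx]
      · have hc' : ¬ ∃ y' ∈ L, ∀ k ∉ I0, y k = y' k := fun h => hc (hcond.mpr h)
        simp [hg, hi, hc, hc']
    refine ⟨A, I, inferInstance, inferInstance, hne, g, ?_, ?_⟩
    · apply Set.eq_of_subset_of_subset
      · rintro _ ⟨x, rfl⟩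
        rw [hsplit]
        constructor
        · by_cases hc : ∃ y ∈ L, ∀ k ∈ I0, x k = y k
          · obtain ⟨y, hy, hxy⟩ := id hc
            refine ⟨y, hy, fun i hi => ?_⟩
            have : g x i = x i := by simp [hg, hi, hc]
            rw [this]; exact hxy i hi
          · refine ⟨y0, hy0, fun i hi => ?_⟩
            simp [hg, hi, hc]
        · by_cases hc : ∃ y ∈ L, ∀ k ∉ I0, x k = y k
          · obtain ⟨y, hy, hxy⟩ := id hc
            refine ⟨y, hy, fun i hi => ?_⟩
            have : g x i = x i := by simp [hg, hi, hc]
            rw [this]; exact hxy i hi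
          · refine ⟨y0, hy0, fun i hi => ?_⟩
            simp [hg, hi, hc]
      · intro x hx
        refine ⟨x, ?_⟩
        have hc0 : ∃ y ∈ L, ∀ k ∈ I0, x k = y k := ⟨x, hx, fun _ _ => rfl⟩
        have hc1 : ∃ y ∈ L, ∀ k ∉ I0, x k = y k := ⟨x, hx, fun _ _ => rfl⟩
        funext i
        by_cases hi : i ∈ I0
        · simp [hg, hi, hc0]
        · simp [hg, hi, hc1]
    · intro S hS
      by_cases h0 : S ⊆ I0
      · exact Or.inl h0
      refine Or.inr fun i hi => ?_
      by_contra hic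
      have hi1 : i ∈ I0 := by simpa using hic
      obtain ⟨i', hi', hi'c⟩ := Set.not_subset.mp h0
      obtain ⟨j, hj⟩ := hS
      simp only [Set.mem_iInter] at hj
      exact (hwin1 i' hi'c (hj i' hi')) (hwin0 i hi1 (hj i hi))

/-- `L` is irreducible iff every complex generating `L` is
connected. -/
theorem stmt8 {A I : Type} [Finite A] [Finite I] (hI : 2 ≤ Nat.card I)
    (L : Set (I → A)) :
    (¬ ∃ I0 : Set I, I0 ≠ ∅ ∧ I0 ≠ Set.univ ∧ SplitBy L I0) ↔
      ∀ K : Set (Set I), Generates K L → ConnectedComplex K := by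
  have hne : Nonempty I := by
    have : 0 < Nat.card I := lt_of_lt_of_le (by norm_num) hI
    exact (Nat.card_pos_iff.mp this).1
  constructor
  · intro hirr K hgen
    rintro ⟨I0, hI0ne, hI0nu, hdisc⟩
    obtain ⟨B, J, _, _, _, f, hrange, hsub⟩ := hgen
    exact hirr ⟨I0, hI0ne, hI0nu, split_of_disconnected hrange hsub hdisc⟩
  · intro hcon
    rintro ⟨I0, hI0ne, hI0nu, hsplit⟩
    obtain ⟨B, J, hB, hJ, hJne, f, hrange, hdisc⟩ := disconnected_of_split hne hsplit
    exact hcon (commComplex f) ⟨B, J, hB, hJ, hJne, f, hrange, fun _ h => h⟩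
      ⟨I0, hI0ne, hI0nu, hdisc⟩
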